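/- For all t ≥ 1, there exists a bijection Λ from M_0^{6t} \ {[01]^{3t}} to M_1^{6t} such that for every S in the domain either S ⊂ Λ(S) or Λ(S) ⊂ S, and moreover Λ([1]^{6t}) = [1]^{6t-2}00 (i.e. Λ maps the full set [6t] to [6t-2]). -/
import Mathlib


/-- `k` concatenated copies of the binary string `γ`. -/
def reps (γ : List Bool) (k : ℕ) : List Bool := (List.replicate k γ).flatten

/-- The support vector `v` ends (on the right) with the string `β`. -/
def EndsWith (v β : List Bool) : Prop := ∃ γ : List Bool, v = γ ++ β

/-- Pointwise order on support vectors: `v ≤ w` iff every element of the subset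
encoded by `v` belongs to the subset encoded by `w`. -/
def vle (v w : List Bool) : Prop :=
  ∀ i : ℕ, v.getD i false = true → w.getD i false = true

/-- The forward map on reversed support vectors. -/
def FF : List Bool → List Bool
  | true :: false :: r => true :: false :: FF r
  | false :: false :: r => false :: true :: r
  | false :: true :: r => true :: true :: r
  | true :: true :: r => false :: false :: r
  | l => l

/-- The inverse map on reversed support vectors. -/
def GG : List Bool → List Bool
  | true :: false :: r => true :: false :: GG r
  | false :: true :: r => false :: false :: r
  | true :: true :: r => false :: true :: r
  | false :: false :: r => true :: true :: r
  | l => l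

inductive Good : List Bool → Prop
  | p00 (r : List Bool) : Good (false :: false :: r)
  | p01 (r : List Bool) : Good (false :: true :: r)
  | p11 (r : List Bool) : Good (true :: true :: r)
  | skip (r : List Bool) : Good r → Good (true :: false :: r)

theorem FF_length : ∀ l : List Bool, (FF l).length = l.length
  | true :: false :: r => by simp [FF, FF_length r]
  | false :: false :: r => by simp [FF]
  | false :: true :: r => by simp [FF]
  | true :: true :: r => by simp [FF]
  | [] => rfl
  | [false] => rfl
  | [true] => rfl

theorem GG_length : ∀ l : List Bool, (GG l).length = l.length
  | true :: false :: r => by simp [GG, GG_length r]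
  | false :: false :: r => by simp [GG]
  | false :: true :: r => by simp [GG]
  | true :: true :: r => by simp [GG]
  | [] => rfl
  | [false] => rfl
  | [true] => rfl

theorem FF_count {l : List Bool} (h : Good l) :
    (FF l).count true % 3 = (l.count true + 1) % 3 := by
  induction h with
  | p00 r => simp [FF, List.count_cons]
  | p01 r => simp [FF, List.count_cons]
  | p11 r => simp [FF, List.count_cons]; omega
  | skip r hr ih => simp only [FF, List.count_cons] at *; omega

theorem GG_count {l : List Bool} (h : Good l) :
    (GG l).count true % 3 = (l.count true + 2) % 3 := by
  induction h with
  | p00 r => simp [GG, List.count_cons]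
  | p01 r => simp [GG, List.count_cons]; omega
  | p11 r => simp [GG, List.count_cons]; omega
  | skip r hr ih => simp only [GG, List.count_cons] at *; omega

theorem GG_FF {l : List Bool} (h : Good l) : GG (FF l) = l := by
  induction h with
  | p00 r => rfl
  | p01 r => rfl
  | p11 r => rfl
  | skip r hr ih => simp [FF, GG, ih]

theorem FF_GG {l : List Bool} (h : Good l) : FF (GG l) = l := by
  induction h with
  | p00 r => rfl
  | p01 r => rfl
  | p11 r => rfl
  | skip r hr ih => simp [FF, GG, ih]

theorem Good_GG {l : List Bool} (h : Good l) : Good (GG l) := by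
  induction h with
  | p00 r => exact Good.p11 r
  | p01 r => exact Good.p00 r
  | p11 r => exact Good.p01 r
  | skip r hr ih => exact Good.skip _ ih

theorem reps_succ (γ : List Bool) (k : ℕ) : reps γ (k + 1) = γ ++ reps γ k := by
  simp [reps, List.replicate_succ]

theorem reps_reverse (a b : Bool) (k : ℕ) :
    (reps [a, b] k).reverse = reps [b, a] k := by
  induction k with
  | zero => rfl
  | succ n ih =>
      rw [reps_succ, List.reverse_append, ih]
      -- goal : reps [b,a] n ++ [a,b].reverse = reps [b,a] (n+1)
      have : ∀ m : ℕ, reps [b, a] m ++ [b, a] = [b, a] ++ reps [b, a] m := by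
        intro m
        induction m with
        | zero => rfl
        | succ p ihp => rw [reps_succ, List.append_assoc, ihp]
      simpa [reps_succ] using this n

theorem reps_count_ft (k : ℕ) : (reps [false, true] k).count true = k := by
  induction k with
  | zero => simp [reps]
  | succ n ih => rw [reps_succ]; simp [List.count_cons, ih]

theorem reps_count_tf (k : ℕ) : (reps [true, false] k).count true = k := by
  induction k with
  | zero => simp [reps]
  | succ n ih => rw [reps_succ]; simp [List.count_cons, ih]

theorem reps_length (γ : List Bool) (k : ℕ) : (reps γ k).length = k * γ.length := by
  induction k with
  | zero => simp [reps]
  | succ n ih => rw [reps_succ]; simp [ih]; ring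

theorem Good_of : ∀ (k : ℕ) (l : List Bool), l.length = 2 * k →
    l ≠ reps [true, false] k → Good l := by
  intro k
  induction k with
  | zero =>
      intro l hl hne
      exact absurd (List.length_eq_zero_iff.mp (by simpa using hl))
        (by simpa [reps] using hne)
  | succ n ih =>
      intro l hl hne
      match l with
      | [] => simp at hl
      | [x] => simp at hl; omega
      | a :: b :: r =>
        match a, b with
        | false, false => exact Good.p00 r
        | false, true => exact Good.p01 r
        | true, true => exact Good.p11 r
        | true, false =>
            refine Good.skip r (ih r ?_ ?_)
            · simp at hl; omega
            · intro hr; apply hne; rw [reps_succ, hr]; rfl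

theorem not_Good_reps : ∀ k : ℕ, ¬ Good (reps [true, false] k) := by
  intro k
  induction k with
  | zero => intro h; exact absurd h (by intro h; cases h)
  | succ n ih =>
      rw [reps_succ]
      intro h
      cases h with
      | skip _ hr => exact ih hr

theorem FF_reps (k : ℕ) : FF (reps [true, false] k) = reps [true, false] k := by
  induction k with
  | zero => rfl
  | succ n ih => rw [reps_succ]; simp [FF, ih]

theorem vle_of_rev {a b : List Bool} (h : a.length = b.length)
    (hv : vle a b) : vle a.reverse b.reverse := by
  intro i hi
  by_cases hlt : i < a.length
  · have hb : i < b.length := by omega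
    rw [List.getD_eq_getElem?_getD, List.getElem?_reverse (by simpa using hlt)] at hi
    rw [List.getD_eq_getElem?_getD, List.getElem?_reverse (by simpa using hb)]
    have h3 := hv (a.length - 1 - i)
    rw [List.getD_eq_getElem?_getD, List.getD_eq_getElem?_getD] at h3
    have h2 : b.length - 1 - i = a.length - 1 - i := by omega
    rw [h2]
    exact h3 hi
  · rw [List.getD_eq_default _ _ (by simp; omega)] at hi
    exact absurd hi (by simp)

theorem FF_comp {l : List Bool} (h : Good l) : vle l (FF l) ∨ vle (FF l) l := by
  induction h with
  | p00 r =>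
      left; intro i hi
      match i with
      | 0 => simp at hi
      | 1 => simp at hi
      | (n+2) =>
          simp only [List.getD_cons_succ] at hi
          simp only [FF, List.getD_cons_succ]
          exact hi
  | p01 r =>
      left; intro i hi
      match i with
      | 0 => simp at hi
      | 1 => simp [FF]
      | (n+2) =>
          simp only [List.getD_cons_succ] at hi
          simp only [FF, List.getD_cons_succ]
          exact hi
  | p11 r =>
      right; intro i hi
      match i with
      | 0 => simp [FF] at hi
      | 1 => simp [FF] at hi
      | (n+2) =>
          simp only [FF, List.getD_cons_succ] at hi
          simp only [List.getD_cons_succ]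
          exact hi
  | skip r hr ih =>
      rcases ih with ih | ih
      · left; intro i hi
        match i with
        | 0 => simp [FF]
        | 1 => simp at hi
        | (n+2) =>
            simp only [List.getD_cons_succ] at hi
            simp only [FF, List.getD_cons_succ]
            exact ih n hi
      · right; intro i hi
        match i with
        | 0 => simp [FF] at hi ⊢
        | 1 => simp [FF] at hi
        | (n+2) =>
            simp only [FF, List.getD_cons_succ] at hi
            simp only [List.getD_cons_succ]
            exact ih n hi

/-- For all `t ≥ 1`, there exists a bijection
`Λ : M_0^{6t} \ {[01]^{3t}} → M_1^{6t}` (where `M_r^n` is the family of subsets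
of `[n]` of cardinality `≡ r (mod 3)`) such that for every `S` in the domain
either `S ⊂ Λ(S)` or `Λ(S) ⊂ S`, and `Λ([1]^{6t}) = [1]^{6t-2}00`. -/
theorem exists_Lambda (t : ℕ) (ht : 1 ≤ t) :
    ∃ Lam : List Bool → List Bool,
      Set.BijOn Lam
        ({v | v.length = 6 * t ∧ v.count true % 3 = 0} \
          {reps [false, true] (3 * t)})
        {v | v.length = 6 * t ∧ v.count true % 3 = 1} ∧
      (∀ v ∈ ({v | v.length = 6 * t ∧ v.count true % 3 = 0} \
          {reps [false, true] (3 * t)} : Set (List Bool)),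
        (vle v (Lam v) ∧ v ≠ Lam v) ∨ (vle (Lam v) v ∧ Lam v ≠ v)) ∧
      Lam (List.replicate (6 * t) true) =
        List.replicate (6 * t - 2) true ++ [false, false] := by
  set A : Set (List Bool) :=
    {v | v.length = 6 * t ∧ v.count true % 3 = 0} \ {reps [false, true] (3 * t)} with hA
  set B : Set (List Bool) := {v | v.length = 6 * t ∧ v.count true % 3 = 1} with hB
  refine ⟨fun v => (FF v.reverse).reverse, ?_, ?_, ?_⟩
  · -- BijOn
    have hGoodA : ∀ v ∈ A, Good v.reverse := by
      intro v hv
      obtain ⟨⟨hlen, hcnt⟩, hne⟩ := hv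
      refine Good_of (3 * t) _ (by simp [hlen]; ring) ?_
      intro hr
      apply hne
      have : v = (reps [true, false] (3 * t)).reverse := by
        rw [← hr, List.reverse_reverse]
      rw [this, reps_reverse]
      rfl
    have hGoodB : ∀ w ∈ B, Good w.reverse := by
      intro w hw
      obtain ⟨hlen, hcnt⟩ := hw
      refine Good_of (3 * t) _ (by simp [hlen]; ring) ?_
      intro hr
      have : w.count true = 3 * t := by
        rw [← List.count_reverse, hr, reps_count_tf]
      omega
    have mapsTo1 : Set.MapsTo (fun v => (FF v.reverse).reverse) A B := by
      intro v hv
      obtain ⟨⟨hlen, hcnt⟩, hne⟩ := hv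
      constructor
      · simp [FF_length, hlen]
      · have := FF_count (hGoodA v ⟨⟨hlen, hcnt⟩, hne⟩)
        simp only [List.count_reverse] at this ⊢
        omega
    have mapsTo2 : Set.MapsTo (fun w => (GG w.reverse).reverse) B A := by
      intro w hw
      obtain ⟨hlen, hcnt⟩ := hw
      have hG := hGoodB w ⟨hlen, hcnt⟩
      refine ⟨⟨by simp [GG_length, hlen], ?_⟩, ?_⟩
      · have := GG_count hG
        simp only [List.count_reverse] at this ⊢
        omega
      · intro hr
        rw [Set.mem_singleton_iff] at hr
        have h2 : GG w.reverse = reps [true, false] (3 * t) := by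
          have := congrArg List.reverse hr
          rw [List.reverse_reverse, reps_reverse] at this
          exact this
        exact not_Good_reps (3 * t) (h2 ▸ Good_GG hG)
    have hInv : Set.InvOn (fun w => (GG w.reverse).reverse)
        (fun v => (FF v.reverse).reverse) A B := by
      constructor
      · intro v hv
        simp only [List.reverse_reverse, GG_FF (hGoodA v hv)]
      · intro w hw
        simp only [List.reverse_reverse, FF_GG (hGoodB w hw)]
    exact hInv.bijOn mapsTo1 mapsTo2
  · -- comparability
    intro v hv
    obtain ⟨⟨hlen, hcnt⟩, hne⟩ := hv
    have hG : Good v.reverse := by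
      refine Good_of (3 * t) _ (by simp [hlen]; ring) ?_
      intro hr
      apply hne
      have : v = (reps [true, false] (3 * t)).reverse := by
        rw [← hr, List.reverse_reverse]
      rw [this, reps_reverse]
      rfl
    have hcnt2 : (FF v.reverse).reverse.count true % 3 = 1 := by
      have := FF_count hG
      simp only [List.count_reverse] at this ⊢
      omega
    have hne2 : v ≠ (FF v.reverse).reverse := by
      intro h
      rw [← h] at hcnt2
      omega
    have hlen2 : v.reverse.length = (FF v.reverse).length := (FF_length _).symm
    rcases FF_comp hG with h | h
    · left
      refine ⟨?_, hne2⟩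
      have := vle_of_rev hlen2 h
      rwa [List.reverse_reverse] at this
    · right
      refine ⟨?_, fun h' => hne2 h'.symm⟩
      have := vle_of_rev hlen2.symm h
      rwa [List.reverse_reverse] at this
  · -- special value
    obtain ⟨m, hm⟩ : ∃ m, 6 * t = m + 2 := ⟨6 * t - 2, by omega⟩
    have hm2 : 6 * t - 2 = m := by omega
    rw [hm2, hm]
    show (FF (List.replicate (m + 2) true).reverse).reverse = _
    rw [List.reverse_replicate]
    rw [show List.replicate (m + 2) true = true :: true :: List.replicate m true from rfl]
    rw [show FF (true :: true :: List.replicate m true)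
        = false :: false :: List.replicate m true from rfl]
    simp
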